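/- Let (Q,I) be a special biserial bound quiver and suppose u - λv ∈ I is a binomial relation from x to y with x ≠ y, where u starts with a simple cycle a at x and u, v share at least one arrow. Then there exist a path p from x to y and a nontrivial cycle b at y such that u = ap and v = pb. -/

import Mathlib

open Classical

noncomputable section

/-- A finite quiver: finite sets of vertices and arrows with source and target maps. -/
structure FQuiver where
  V : Type
  A : Type
  [fintV : Fintype V]
  [decV : DecidableEq V]
  [fintA : Fintype A]
  [decA : DecidableEq A]
  src : A → V
  tgt : A → V

attribute [instance] FQuiver.fintV FQuiver.decV FQuiver.fintA FQuiver.decA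

namespace FQuiver

variable {Q : FQuiver}

/-- Oriented paths in a quiver. -/
inductive Path (Q : FQuiver) : Q.V → Q.V → Type
  | nil (v : Q.V) : Path Q v v
  | cons (a : Q.A) {w : Q.V} (p : Path Q (Q.tgt a) w) : Path Q (Q.src a) w

/-- Composition (concatenation) of paths. -/
def Path.comp : ∀ {u v w : Q.V}, Path Q u v → Path Q v w → Path Q u w
  | _, _, _, .nil _, q => q
  | _, _, _, .cons a p, q => .cons a (Path.comp p q)

/-- Length of a path. -/
def Path.length : ∀ {u v : Q.V}, Path Q u v → ℕ
  | _, _, .nil _ => 0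
  | _, _, .cons _ p => Path.length p + 1

/-- The list of arrows of a path, in order. -/
def Path.arrows : ∀ {u v : Q.V}, Path Q u v → List Q.A
  | _, _, .nil _ => []
  | _, _, .cons a p => a :: Path.arrows p

/-- An arrow regarded as a path of length one. -/
def arrow (Q : FQuiver) (a : Q.A) : Path Q (Q.src a) (Q.tgt a) := .cons a (.nil _)

/-- Power of an oriented cycle. -/
def Path.pow {x : Q.V} (c : Path Q x x) : ℕ → Path Q x x
  | 0 => .nil x
  | n + 1 => c.comp (Path.pow c n)

/-- Transport a path along equalities of its endpoints. -/
def Path.cast {u u' v v' : Q.V} (hu : u = u') (hv : v = v') (p : Path Q u v) :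
    Path Q u' v' := by subst hu; subst hv; exact p

/-- The length-two path `ab` formed by two composable arrows. -/
def comp2 (a b : Q.A) (h : Q.src b = Q.tgt a) : Path Q (Q.src a) (Q.tgt b) :=
  (arrow Q a).comp ((arrow Q b).cast h rfl)

/-- The set of all paths of a quiver, bundled with their endpoints. -/
def PathsSigma (Q : FQuiver) : Type := Σ (u : Q.V) (v : Q.V), Path Q u v

/-- The underlying vector space of the path algebra `kQ`: the free `k`-module on paths. -/
abbrev PAlg (k : Type) [Field k] (Q : FQuiver) : Type := PathsSigma Q →₀ k

/-- The basis vector of `kQ` corresponding to a path. -/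
def pvec (k : Type) [Field k] {u v : Q.V} (p : Path Q u v) : PAlg k Q :=
  Finsupp.single ⟨u, v, p⟩ 1

/-- Left multiplication of an element of `kQ` by a path. -/
def lmul (k : Type) [Field k] {u v : Q.V} (p : Path Q u v) (x : PAlg k Q) : PAlg k Q :=
  x.sum fun s c => if h : s.1 = v then c • pvec k (p.comp ((Sigma.snd (Sigma.snd s)).cast h rfl)) else 0

/-- Right multiplication of an element of `kQ` by a path. -/
def rmul (k : Type) [Field k] {u v : Q.V} (x : PAlg k Q) (p : Path Q u v) : PAlg k Q :=
  x.sum fun s c => if h : s.2.1 = u then c • pvec k (Path.comp ((Sigma.snd (Sigma.snd s)).cast rfl h) p) else 0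

/-- The two-sided ideal of `kQ` generated by a set of elements. -/
def idealGen (k : Type) [Field k] (Q : FQuiver) (s : Set (PAlg k Q)) : Submodule k (PAlg k Q) :=
  sInf {M : Submodule k (PAlg k Q) |
    s ⊆ (M : Set (PAlg k Q)) ∧
    ∀ (u v : Q.V) (p : Path Q u v) (x : PAlg k Q), x ∈ M → lmul k p x ∈ M ∧ rmul k x p ∈ M}

/-- An admissible (two-sided) ideal `(kQ⁺)ᵐ ⊆ I ⊆ (kQ⁺)²` of the path algebra. -/
structure AdmissibleIdeal (k : Type) [Field k] (Q : FQuiver) where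
  I : Submodule k (PAlg k Q)
  lmul_mem : ∀ {u v : Q.V} (p : Path Q u v) {x : PAlg k Q}, x ∈ I → lmul k p x ∈ I
  rmul_mem : ∀ {u v : Q.V} (p : Path Q u v) {x : PAlg k Q}, x ∈ I → rmul k x p ∈ I
  bound : ℕ
  two_le_bound : 2 ≤ bound
  pow_le : ∀ {u v : Q.V} (p : Path Q u v), bound ≤ p.length → pvec k p ∈ I
  le_sq : ∀ x ∈ I, ∀ s ∈ x.support, 2 ≤ (Sigma.snd (Sigma.snd s)).length

/-- A special biserial bound quiver `(Q, I)`. -/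
structure SpecialBiserial (k : Type) [Field k] (Q : FQuiver) extends AdmissibleIdeal k Q where
  src_card : ∀ v : Q.V, Fintype.card {a : Q.A // Q.src a = v} ≤ 2
  tgt_card : ∀ v : Q.V, Fintype.card {a : Q.A // Q.tgt a = v} ≤ 2
  unique_succ : ∀ (a b c : Q.A) (hb : Q.src b = Q.tgt a) (hc : Q.src c = Q.tgt a),
      pvec k (comp2 a b hb) ∉ I → pvec k (comp2 a c hc) ∉ I → b = c
  unique_pred : ∀ (a b c : Q.A) (hb : Q.tgt b = Q.src a) (hc : Q.tgt c = Q.src a),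
      pvec k (comp2 b a hb.symm) ∉ I → pvec k (comp2 c a hc.symm) ∉ I → b = c

/-- A binomial relation `u - λv ∈ I` between distinct parallel paths not in `I`. -/
structure BinRel {k : Type} [Field k] {Q : FQuiver} (J : AdmissibleIdeal k Q) where
  s : Q.V
  t : Q.V
  u : Path Q s t
  v : Path Q s t
  coef : k
  coef_ne : coef ≠ 0
  u_ne_v : u ≠ v
  u_not_mem : pvec k u ∉ J.I
  v_not_mem : pvec k v ∉ J.I
  rel_mem : pvec k u - coef • pvec k v ∈ J.I

/-- `I` is generated by a set of paths (monomial relations) together with the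
binomial relations in `R`. -/
def Generates {k : Type} [Field k] {Q : FQuiver} (J : AdmissibleIdeal k Q)
    (R : Set (BinRel J)) : Prop :=
  ∃ P : Set (PathsSigma Q),
    (∀ s ∈ P, pvec k (Sigma.snd (Sigma.snd s)) ∈ J.I) ∧
    J.I = idealGen k Q
      (((fun s : PathsSigma Q => pvec k (Sigma.snd (Sigma.snd s))) '' P) ∪
       ((fun r : BinRel J => pvec k r.u - r.coef • pvec k r.v) '' R))

/-- The ideal `S ⊆ A = kQ/I`: the span of the residue classes of the paths occurring
in the binomial relations of `R`. -/
def Smod {k : Type} [Field k] {Q : FQuiver} (J : AdmissibleIdeal k Q) (R : Set (BinRel J)) :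
    Submodule k (PAlg k Q ⧸ J.I) :=
  Submodule.span k
    ((fun r : BinRel J => (Submodule.Quotient.mk (pvec k r.u) : PAlg k Q ⧸ J.I)) '' R)

/-- Number of connected components of the underlying graph of `Q`. -/
def numComponents (Q : FQuiver) : ℕ :=
  Nat.card (Quot (fun u v : Q.V => ∃ a : Q.A, Q.src a = u ∧ Q.tgt a = v))

/-- A quiver is acyclic (triangular) if it has no nontrivial oriented cycle. -/
def Acyclic (Q : FQuiver) : Prop := ∀ (x : Q.V) (p : Path Q x x), p.length = 0

/-- A simple cycle: a nontrivial oriented cycle visiting no vertex twice. -/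
def IsSimpleCycle {x : Q.V} (p : Path Q x x) : Prop :=
  p.length ≠ 0 ∧ (p.arrows.map Q.src).Nodup

/-- `dim_k S = χ(Q)`, written additively: `dim S + |Q₀| = |Q₁| + N`. -/
def EulerEq {k : Type} [Field k] {Q : FQuiver} (J : AdmissibleIdeal k Q)
    (R : Set (BinRel J)) : Prop :=
  Module.finrank k ↥(Smod J R) + Fintype.card Q.V = Fintype.card Q.A + numComponents Q

/-- The word in the free group on the arrows determined by a path. -/
def pathWord (Q : FQuiver) {u v : Q.V} (p : Path Q u v) : FreeGroup Q.A :=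
  (p.arrows.map FreeGroup.of).prod

/-- `T` is a spanning tree of (the underlying graph of) `Q`. -/
def IsSpanningTree (Q : FQuiver) (T : Set Q.A) : Prop :=
  (∀ u v : Q.V,
      Quot.mk (fun a b : Q.V => ∃ e ∈ T, Q.src e = a ∧ Q.tgt e = b) u =
      Quot.mk (fun a b : Q.V => ∃ e ∈ T, Q.src e = a ∧ Q.tgt e = b) v) ∧
  Nat.card T + 1 = Fintype.card Q.V

/-- The fundamental group of the bound quiver `(Q, I)` (for connected `Q`,
with respect to a spanning tree `T`): the free group on the arrows modulo the
tree arrows and the homotopy relations coming from the binomial relations. -/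
abbrev pi1 {k : Type} [Field k] {Q : FQuiver} (J : AdmissibleIdeal k Q)
    (T : Set Q.A) (R : Set (BinRel J)) : Type :=
  FreeGroup Q.A ⧸ Subgroup.normalClosure
    ((FreeGroup.of '' T) ∪
     ((fun r : BinRel J => pathWord Q r.u * (pathWord Q r.v)⁻¹) '' R))

end FQuiver


namespace FQuiver

section Infra

variable {Q : FQuiver}

@[simp] theorem Path.cast_rfl {u v : Q.V} (p : Path Q u v) : p.cast rfl rfl = p := rfl

theorem Path.cast_self {u v : Q.V} (h1 : u = u) (h2 : v = v) (p : Path Q u v) :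
    p.cast h1 h2 = p := by
  rw [Subsingleton.elim h1 rfl, Subsingleton.elim h2 rfl]
  exact Path.cast_rfl p

@[simp] theorem nil_comp {u v : Q.V} (q : Path Q u v) : (Path.nil u).comp q = q := rfl

@[simp] theorem cons_comp (a : Q.A) {v w : Q.V} (p : Path Q (Q.tgt a) v) (q : Path Q v w) :
    (Path.cons a p).comp q = Path.cons a (p.comp q) := rfl

@[simp] theorem comp_nil : ∀ {u v : Q.V} (p : Path Q u v), p.comp (Path.nil v) = p
  | _, _, .nil _ => rfl
  | _, _, .cons a p => congrArg (Path.cons a) (comp_nil p)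

theorem comp_assoc : ∀ {u v w z : Q.V} (p : Path Q u v) (q : Path Q v w) (r : Path Q w z),
    (p.comp q).comp r = p.comp (q.comp r)
  | _, _, _, _, .nil _, _, _ => rfl
  | _, _, _, _, .cons a p, q, r => congrArg (Path.cons a) (comp_assoc p q r)

@[simp] theorem length_nil {v : Q.V} : (Path.nil (Q := Q) v).length = 0 := rfl

@[simp] theorem length_cons (a : Q.A) {w : Q.V} (p : Path Q (Q.tgt a) w) :
    (Path.cons a p).length = p.length + 1 := rfl

@[simp] theorem length_comp : ∀ {u v w : Q.V} (p : Path Q u v) (q : Path Q v w),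
    (p.comp q).length = p.length + q.length
  | _, _, _, .nil _, q => (Nat.zero_add _).symm
  | _, _, _, .cons a p, q => by
      show (p.comp q).length + 1 = p.length + 1 + q.length
      rw [length_comp p q]; omega

@[simp] theorem arrows_nil {v : Q.V} : (Path.nil (Q := Q) v).arrows = [] := rfl

@[simp] theorem arrows_arrow (b : Q.A) : (arrow Q b).arrows = [b] := rfl

@[simp] theorem length_arrow (b : Q.A) : (arrow Q b).length = 1 := rfl

@[simp] theorem arrows_cons (a : Q.A) {w : Q.V} (p : Path Q (Q.tgt a) w) :
    (Path.cons a p).arrows = a :: p.arrows := rfl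

@[simp] theorem arrows_comp : ∀ {u v w : Q.V} (p : Path Q u v) (q : Path Q v w),
    (p.comp q).arrows = p.arrows ++ q.arrows
  | _, _, _, .nil _, q => rfl
  | _, _, _, .cons a p, q => by
      show a :: (p.comp q).arrows = a :: p.arrows ++ q.arrows
      rw [arrows_comp p q]; rfl

@[simp] theorem length_arrows : ∀ {u v : Q.V} (p : Path Q u v), p.arrows.length = p.length
  | _, _, .nil _ => rfl
  | _, _, .cons a p => by simp [length_arrows p]

@[simp] theorem length_cast {u u' v v' : Q.V} (hu : u = u') (hv : v = v') (p : Path Q u v) :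
    (p.cast hu hv).length = p.length := by subst hu; subst hv; rfl

@[simp] theorem arrows_cast {u u' v v' : Q.V} (hu : u = u') (hv : v = v') (p : Path Q u v) :
    (p.cast hu hv).arrows = p.arrows := by subst hu; subst hv; rfl

theorem cast_comp {w w' y z : Q.V} (h : w' = w) (p : Path Q w' y) (r : Path Q y z) :
    (p.comp r).cast h rfl = (p.cast h rfl).comp r := by subst h; rfl

theorem comp_cast_assoc {x w w' y z : Q.V} (h : w' = w) (s : Path Q x w) (p : Path Q w' y)
    (r : Path Q y z) :
    s.comp ((p.comp r).cast h rfl) = (s.comp (p.cast h rfl)).comp r := by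
  subst h; simp [comp_assoc]

theorem path_cases {s v : Q.V} (q : Path Q s v) :
    (∃ h : s = v, q = (Path.nil s).cast rfl h) ∨
      ∃ (b : Q.A) (h : Q.src b = s) (r : Path Q (Q.tgt b) v),
        q = ((arrow Q b).comp r).cast h rfl := by
  cases q with
  | nil => exact .inl ⟨rfl, rfl⟩
  | cons a p => exact .inr ⟨a, rfl, p, rfl⟩

theorem eq_nil_of_length_zero {s v : Q.V} (q : Path Q s v) (h : q.length = 0) :
    ∃ hsv : s = v, q = (Path.nil s).cast rfl hsv := by
  cases q with
  | nil => exact ⟨rfl, rfl⟩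
  | cons a p => simp at h

theorem cycle_eq_nil {s : Q.V} (q : Path Q s s) (h : q.length = 0) : q = Path.nil s := by
  obtain ⟨h1, hq⟩ := eq_nil_of_length_zero q h
  rw [hq, Path.cast_self]

theorem length_ne_zero_of_ne {s v : Q.V} (p : Path Q s v) (h : s ≠ v) : p.length ≠ 0 := by
  intro h0
  obtain ⟨hsv, -⟩ := eq_nil_of_length_zero p h0
  exact h hsv

theorem arrows_ne_nil_of_length {s v : Q.V} (p : Path Q s v) (h : p.length ≠ 0) :
    ∃ (b : Q.A) (l : List Q.A), p.arrows = b :: l := by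
  cases hp : p.arrows with
  | nil => exact absurd (by rw [← length_arrows p, hp]; rfl) (Ne.symm h)
  | cons b l => exact ⟨b, l, rfl⟩

theorem head?_eq_of_length {s v : Q.V} (p : Path Q s v) (h : p.length ≠ 0) :
    ∃ b : Q.A, p.arrows.head? = some b := by
  obtain ⟨b, l, hp⟩ := arrows_ne_nil_of_length p h
  exact ⟨b, by rw [hp]; rfl⟩

theorem head_src {s v : Q.V} (p : Path Q s v) {b : Q.A} (h : p.arrows.head? = some b) :
    Q.src b = s := by
  cases p with
  | nil => simp at h
  | cons a q => simp at h; rw [h]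

theorem last_tgt : ∀ {s v : Q.V} (p : Path Q s v) {b : Q.A},
    p.arrows.getLast? = some b → Q.tgt b = v := by
  intro s v p
  induction p with
  | nil => intro b h; simp at h
  | cons a q ih =>
      intro b h
      rcases path_cases q with ⟨h1, hq⟩ | ⟨B, hB, r, hq⟩
      · rw [hq] at h
        simp at h
        rw [← h]; exact h1
      · have : q.arrows = B :: ((arrow Q B).comp r).arrows.tail := by
          rw [hq]; simp
        rw [arrows_cons, this, List.getLast?_cons_cons] at h
        rw [← this] at h
        exact ih h

end Infra

section InfraB

variable {Q : FQuiver}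

theorem arrows_injective : ∀ {u v : Q.V} (p q : Path Q u v), p.arrows = q.arrows → p = q := by
  intro u v p
  induction p with
  | nil =>
      intro q h
      have hq0 : q.length = 0 := by rw [← length_arrows, ← h]; rfl
      exact (cycle_eq_nil q hq0).symm
  | cons a p' ih =>
      intro q h
      rcases path_cases q with ⟨h1, hq⟩ | ⟨B, hB, r, hq⟩
      · rw [hq] at h; simp at h
      · rw [hq] at h ⊢
        simp at h
        obtain ⟨hab, htl⟩ := h
        subst hab
        have hBr : Path.cast hB rfl ((arrow Q a).comp r) = Path.cons a r := by
          rw [Subsingleton.elim hB rfl]; rfl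
        rw [hBr]
        have : p' = r := ih r htl
        rw [this]

theorem comp_left_cancel {u v w : Q.V} (p : Path Q u v) (q₁ q₂ : Path Q v w)
    (h : p.comp q₁ = p.comp q₂) : q₁ = q₂ := by
  apply arrows_injective
  have := congrArg Path.arrows h
  simp at this
  exact this

theorem prefix_tri : ∀ {x y₁ y₂ Y : Q.V} (p₁ : Path Q x y₁) (q₁ : Path Q y₁ Y)
    (p₂ : Path Q x y₂) (q₂ : Path Q y₂ Y), p₁.comp q₁ = p₂.comp q₂ →
    p₁.length ≤ p₂.length → ∃ z : Path Q y₁ y₂, p₂ = p₁.comp z ∧ q₁ = z.comp q₂ := by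
  intro x y₁ y₂ Y p₁
  induction p₁ with
  | nil =>
      intro q₁ p₂ q₂ h _
      exact ⟨p₂, rfl, h⟩
  | cons a p₁' ih =>
      intro q₁ p₂ q₂ h hlen
      rcases path_cases p₂ with ⟨h1, hp₂⟩ | ⟨B, hB, p₂', hp₂⟩
      · exfalso; rw [hp₂] at hlen; simp at hlen
      · rw [hp₂] at h hlen
        have harr := congrArg Path.arrows h
        simp at harr
        obtain ⟨hab, -⟩ := harr
        subst hab
        have hBr : Path.cast hB rfl ((arrow Q a).comp p₂') = Path.cons a p₂' := by
          rw [Subsingleton.elim hB rfl]; rfl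
        rw [hBr] at h hp₂
        have h' : p₁'.comp q₁ = p₂'.comp q₂ := by
          have := congrArg Path.arrows h
          simp at this
          apply arrows_injective
          simp [this]
        have hlen' : p₁'.length ≤ p₂'.length := by simp at hlen; omega
        obtain ⟨z, hz1, hz2⟩ := ih q₁ p₂' q₂ h' hlen'
        exact ⟨z, by rw [hp₂, hz1]; rfl, hz2⟩

theorem split_at_mem : ∀ {u v : Q.V} (p : Path Q u v) (e : Q.A), e ∈ p.arrows →
    ∃ (s : Path Q u (Q.src e)) (t : Path Q (Q.tgt e) v), p = s.comp ((arrow Q e).comp t) := by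
  intro u v p
  induction p with
  | nil => intro e he; simp at he
  | cons a p' ih =>
      intro e he
      simp at he
      rcases he with he | he
      · subst he
        exact ⟨Path.nil _, p', rfl⟩
      · obtain ⟨s, t, hst⟩ := ih e he
        exact ⟨Path.cons a s, t, by rw [hst]; rfl⟩

/-! ### Reversal -/

abbrev rev (Q : FQuiver) : FQuiver :=
  { V := Q.V, A := Q.A, fintV := Q.fintV, decV := Q.decV, fintA := Q.fintA, decA := Q.decA,
    src := Q.tgt, tgt := Q.src }

def Path.rev : ∀ {u v : Q.V}, Path Q u v → Path (FQuiver.rev Q) v u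
  | _, _, .nil x => Path.nil (Q := FQuiver.rev Q) x
  | _, _, .cons a p => (Path.rev p).comp (arrow (FQuiver.rev Q) a)

theorem rev_comp : ∀ {u v w : Q.V} (p : Path Q u v) (q : Path Q v w),
    (p.comp q).rev = q.rev.comp p.rev
  | _, _, _, .nil _, q => (comp_nil _).symm
  | _, _, _, .cons a p, q => by
      show (Path.rev (p.comp q)).comp (arrow (FQuiver.rev Q) a)
          = (Path.rev q).comp ((Path.rev p).comp (arrow (FQuiver.rev Q) a))
      rw [rev_comp p q, comp_assoc]

theorem rev_rev : ∀ {u v : Q.V} (p : Path Q u v), p.rev.rev = p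
  | _, _, .nil _ => rfl
  | _, _, .cons a p => by
      show Path.rev ((Path.rev p).comp (arrow (FQuiver.rev Q) a)) = Path.cons a p
      rw [rev_comp]
      show (arrow Q a).comp (Path.rev (Path.rev p)) = Path.cons a p
      rw [rev_rev p]
      rfl

@[simp] theorem arrows_rev : ∀ {u v : Q.V} (p : Path Q u v), p.rev.arrows = p.arrows.reverse
  | _, _, .nil _ => rfl
  | _, _, .cons a p => by
      show ((Path.rev p).comp (arrow (FQuiver.rev Q) a)).arrows = (a :: p.arrows).reverse
      rw [arrows_comp, arrows_rev p]
      simp [arrow, Path.arrows]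

@[simp] theorem length_rev {u v : Q.V} (p : Path Q u v) : p.rev.length = p.length := by
  rw [← length_arrows, ← length_arrows p, arrows_rev, List.length_reverse]

/-! ### Powers -/

@[simp] theorem pow_zero {x : Q.V} (c : Path Q x x) : c.pow 0 = Path.nil x := rfl

theorem pow_succ {x : Q.V} (c : Path Q x x) (n : ℕ) : c.pow (n + 1) = c.comp (c.pow n) := rfl

@[simp] theorem length_pow {x : Q.V} (c : Path Q x x) : ∀ n, (c.pow n).length = n * c.length
  | 0 => by simp
  | n + 1 => by rw [pow_succ, length_comp, length_pow c n]; ring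

theorem pow_succ_comm {x : Q.V} (c : Path Q x x) : ∀ n, (c.pow n).comp c = c.comp (c.pow n)
  | 0 => by simp
  | n + 1 => by
      rw [pow_succ, comp_assoc, pow_succ_comm c n]

theorem pow_add {x : Q.V} (c : Path Q x x) : ∀ m n, c.pow (m + n) = (c.pow m).comp (c.pow n)
  | 0, n => by rw [Nat.zero_add]; rfl
  | m + 1, n => by
      have : m + 1 + n = (m + n) + 1 := by omega
      rw [this, pow_succ, pow_add c m n, pow_succ, comp_assoc]

theorem last?_comp_right {u v w : Q.V} (p : Path Q u v) (q : Path Q v w) (h : q.length ≠ 0) :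
    (p.comp q).arrows.getLast? = q.arrows.getLast? := by
  rw [arrows_comp]
  obtain ⟨b, l, hq⟩ := arrows_ne_nil_of_length q h
  rw [hq]
  exact List.getLast?_append_of_ne_nil _ (by simp)

theorem head?_comp_left {u v w : Q.V} (p : Path Q u v) (q : Path Q v w) (h : p.length ≠ 0) :
    (p.comp q).arrows.head? = p.arrows.head? := by
  rw [arrows_comp]
  obtain ⟨b, l, hp⟩ := arrows_ne_nil_of_length p h
  rw [hp]; rfl

theorem last?_pow {x : Q.V} (c : Path Q x x) (hc : c.length ≠ 0) :
    ∀ n, n ≠ 0 → (c.pow n).arrows.getLast? = c.arrows.getLast? := by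
  intro n
  induction n with
  | zero => intro h; exact absurd rfl h
  | succ n ih =>
      intro _
      rw [pow_succ]
      rcases Nat.eq_zero_or_pos n with hn | hn
      · subst hn; simp
      · rw [last?_comp_right _ _ (by rw [length_pow]; exact Nat.mul_ne_zero (by omega) hc),
          ih (by omega)]

end InfraB

section InfraC

variable {k : Type} [Field k] {Q : FQuiver}

theorem pvec_cast {u u' v v' : Q.V} (hu : u = u') (hv : v = v') (p : Path Q u v) :
    pvec k (p.cast hu hv) = pvec k p := by subst hu; subst hv; rfl

theorem lmul_pvec {u v w : Q.V} (p : Path Q u v) (q : Path Q v w) :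
    lmul k p (pvec k q) = pvec k (p.comp q) := by
  unfold lmul pvec
  erw [Finsupp.sum_single_index]
  · rw [dif_pos rfl]
    simp [Path.cast_rfl]
  · rw [dif_pos rfl]
    simp

theorem rmul_pvec {u v w : Q.V} (p : Path Q u v) (q : Path Q v w) :
    rmul k (pvec k p) q = pvec k (p.comp q) := by
  unfold rmul pvec
  erw [Finsupp.sum_single_index]
  · rw [dif_pos rfl]
    simp [Path.cast_rfl]
  · rw [dif_pos rfl]
    simp

theorem rmul_pair {x₁ x₂ y z : Q.V} (p : Path Q x₁ y) (q : Path Q x₂ y) (c : k)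
    (t : Path Q y z) :
    rmul k (pvec k p - c • pvec k q) t = pvec k (p.comp t) - c • pvec k (q.comp t) := by
  have h1 : pvec k p - c • pvec k q
      = Finsupp.single ⟨x₁, y, p⟩ 1 + Finsupp.single ⟨x₂, y, q⟩ (-c) := by
    unfold pvec
    erw [Finsupp.smul_single]
    erw [sub_eq_add_neg, ← Finsupp.single_neg]
    norm_num
  rw [h1]
  unfold rmul
  rw [Finsupp.sum_add_index']
  · erw [Finsupp.sum_single_index, Finsupp.sum_single_index]
    · rw [dif_pos rfl, dif_pos rfl]
      simp [Path.cast_rfl, pvec, sub_eq_add_neg, ← Finsupp.single_neg, Finsupp.smul_single]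
    · rw [dif_pos rfl]; simp
    · rw [dif_pos rfl]; simp
  · intro s
    split <;> simp
  · intro s c₁ c₂
    split <;> simp [add_smul]

theorem lmul_pair {x y₁ y₂ z : Q.V} (p : Path Q x y₁) (q : Path Q x y₂) (c : k)
    (t : Path Q z x) :
    lmul k t (pvec k p - c • pvec k q) = pvec k (t.comp p) - c • pvec k (t.comp q) := by
  have h1 : pvec k p - c • pvec k q
      = Finsupp.single ⟨x, y₁, p⟩ 1 + Finsupp.single ⟨x, y₂, q⟩ (-c) := by
    unfold pvec
    erw [Finsupp.smul_single]
    erw [sub_eq_add_neg, ← Finsupp.single_neg]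
    norm_num
  rw [h1]
  unfold lmul
  rw [Finsupp.sum_add_index']
  · erw [Finsupp.sum_single_index, Finsupp.sum_single_index]
    · rw [dif_pos rfl, dif_pos rfl]
      simp [Path.cast_rfl, pvec, sub_eq_add_neg, ← Finsupp.single_neg, Finsupp.smul_single]
    · rw [dif_pos rfl]; simp
    · rw [dif_pos rfl]; simp
  · intro s
    split <;> simp
  · intro s c₁ c₂
    split <;> simp [add_smul]

variable (SB : SpecialBiserial k Q)

theorem mem_comp_left {u v w : Q.V} (p : Path Q u v) (q : Path Q v w)
    (h : pvec k q ∈ SB.I) : pvec k (p.comp q) ∈ SB.I := by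
  rw [← lmul_pvec]
  exact SB.lmul_mem p h

theorem mem_comp_right {u v w : Q.V} (p : Path Q u v) (q : Path Q v w)
    (h : pvec k p ∈ SB.I) : pvec k (p.comp q) ∈ SB.I := by
  rw [← rmul_pvec]
  exact SB.rmul_mem q h

theorem mem_comp_middle {u v w z : Q.V} (s : Path Q u v) (m : Path Q v w) (t : Path Q w z)
    (h : pvec k m ∈ SB.I) : pvec k (s.comp (m.comp t)) ∈ SB.I :=
  mem_comp_left SB _ _ (mem_comp_right SB _ _ h)

/-- The key "absorption" lemma: a relation `u ≡ c · (w u r)` with `w, r` cycles,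
not both trivial, forces `u ∈ I`. -/
theorem absorb_two {x y : Q.V} (u : Path Q x y) (w : Path Q x x) (r : Path Q y y) (c : k)
    (hlen : w.length + r.length ≠ 0)
    (hrel : pvec k u - c • pvec k (w.comp (u.comp r)) ∈ SB.I) : pvec k u ∈ SB.I := by
  have key : ∀ n : ℕ, pvec k u - (c ^ n) • pvec k ((w.pow n).comp (u.comp (r.pow n))) ∈ SB.I := by
    intro n
    induction n with
    | zero =>
        simp [comp_nil]
    | succ n ih =>
        have hd : pvec k ((w.pow n).comp (u.comp (r.pow n)))
            - c • pvec k ((w.pow (n+1)).comp (u.comp (r.pow (n+1)))) ∈ SB.I := by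
          have h1 := SB.rmul_mem (r.pow n) hrel
          rw [rmul_pair] at h1
          have h2 := SB.lmul_mem (w.pow n) h1
          rw [lmul_pair] at h2
          have e2 : (w.pow n).comp ((w.comp (u.comp r)).comp (r.pow n))
              = (w.pow (n+1)).comp (u.comp (r.pow (n+1))) := by
            rw [pow_succ, pow_succ, ← pow_succ_comm w n]
            simp [comp_assoc]
          rw [← e2]
          exact h2
        have comb : pvec k u - (c ^ (n+1)) • pvec k ((w.pow (n+1)).comp (u.comp (r.pow (n+1))))
            = (pvec k u - (c ^ n) • pvec k ((w.pow n).comp (u.comp (r.pow n))))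
              + (c ^ n) • (pvec k ((w.pow n).comp (u.comp (r.pow n)))
                - c • pvec k ((w.pow (n+1)).comp (u.comp (r.pow (n+1))))) := by
          rw [smul_sub, smul_smul, show c ^ (n+1) = c ^ n * c from _root_.pow_succ c n]
          abel
        rw [comb]
        exact Submodule.add_mem _ ih (Submodule.smul_mem _ _ hd)
  have hmem : pvec k ((w.pow SB.bound).comp (u.comp (r.pow SB.bound))) ∈ SB.I := by
    apply SB.pow_le
    rw [length_comp, length_comp, length_pow, length_pow]
    have : 1 ≤ w.length + r.length := by omega
    calc SB.bound ≤ SB.bound * (w.length + r.length) := by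
          exact Nat.le_mul_of_pos_right _ (by omega)
      _ ≤ SB.bound * w.length + (u.length + SB.bound * r.length) := by
          rw [Nat.mul_add]; omega
  have := Submodule.add_mem _ (key SB.bound)
    (Submodule.smul_mem _ (c ^ SB.bound) hmem)
  simpa using this

/-- Scaling a binomial relation to swap the two sides. -/
theorem swap_rel {x y : Q.V} (u v : Path Q x y) (c : k) (hc : c ≠ 0)
    (hrel : pvec k u - c • pvec k v ∈ SB.I) :
    pvec k v - c⁻¹ • pvec k u ∈ SB.I := by
  have := Submodule.smul_mem SB.I (-c⁻¹) hrel
  have e : (-c⁻¹) • (pvec k u - c • pvec k v) = pvec k v - c⁻¹ • pvec k u := by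
    rw [smul_sub, smul_smul, neg_smul, neg_mul, inv_mul_cancel₀ hc, neg_smul, one_smul,
      sub_neg_eq_add]
    abel
  rwa [e] at this

end InfraC

section InfraD

variable {Q : FQuiver}

/-- Generic "follow" lemma: two paths with a common source whose consecutive pairs satisfy a
deterministic relation `G`, with agreeing first arrows, are prefix-comparable. -/
theorem gfollow {Q' : FQuiver} (G : Q'.A → Q'.A → Prop)
    (huniq : ∀ a b c : Q'.A, Q'.src b = Q'.tgt a → Q'.src c = Q'.tgt a → G a b → G a c → b = c) :
    ∀ (n : ℕ) {w y₁ y₂ : Q'.V} (p : Path Q' w y₁) (q : Path Q' w y₂), p.length ≤ n →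
      p.length ≤ q.length → List.Chain' G p.arrows → List.Chain' G q.arrows →
      (∀ b b' : Q'.A, p.arrows.head? = some b → q.arrows.head? = some b' → b = b') →
      ∃ r : Path Q' y₁ y₂, q = p.comp r := by
  intro n
  induction n with
  | zero =>
      intro w y₁ y₂ p q hn _ _ _ _
      obtain ⟨hw, hp⟩ := eq_nil_of_length_zero p (by omega)
      subst hw
      rw [hp, Path.cast_self]
      exact ⟨q, rfl⟩
  | succ n ih =>
      intro w y₁ y₂ p q hn hlen hcp hcq hheads
      rcases path_cases p with ⟨hw, hp⟩ | ⟨A, hA, p', hp⟩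
      · subst hw
        rw [hp, Path.cast_self]
        exact ⟨q, rfl⟩
      · subst hA
        rw [Path.cast_rfl] at hp
        rcases path_cases q with ⟨hw, hq⟩ | ⟨B, hB, q', hq⟩
        · exfalso
          rw [hp, hq] at hlen
          simp at hlen
        · have hAB : A = B := by
            apply hheads
            · rw [hp]; simp
            · rw [hq]; simp
          subst hAB
          rw [Path.cast_self] at hq
          have hcp' : List.Chain' G ((arrow Q' A).comp p').arrows := by rw [← hp]; exact hcp
          have hcq' : List.Chain' G ((arrow Q' A).comp q').arrows := by rw [← hq]; exact hcq
          simp at hcp' hcq'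
          rw [List.Chain', List.isChain_cons] at hcp' hcq'
          have hh' : ∀ b b' : Q'.A, p'.arrows.head? = some b → q'.arrows.head? = some b' →
              b = b' := by
            intro b b' hb hb'
            exact huniq A b b' (head_src p' hb) (head_src q' hb')
              (hcp'.1 b (Option.mem_def.2 hb)) (hcq'.1 b' (Option.mem_def.2 hb'))
          have hlen' : p'.length ≤ q'.length := by
            rw [hp, hq] at hlen; simp at hlen; omega
          have hn' : p'.length ≤ n := by
            rw [hp] at hn; simp at hn; omega
          obtain ⟨r, hr⟩ := ih p' q' hn' hlen' hcp'.2 hcq'.2 hh'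
          refine ⟨r, ?_⟩
          rw [hq, hr, hp, comp_assoc]

/-- Follow from the back, with the arrows reversed. -/
theorem bfollow {Q' : FQuiver} (G : Q'.A → Q'.A → Prop)
    (huniqP : ∀ a b c : Q'.A, Q'.tgt b = Q'.src a → Q'.tgt c = Q'.src a → G b a → G c a → b = c)
    {x₁ x₂ m : Q'.V} (S₁ : Path Q' x₁ m) (S₂ : Path Q' x₂ m) (hlen : S₂.length ≤ S₁.length)
    (hc1 : List.Chain' G S₁.arrows) (hc2 : List.Chain' G S₂.arrows)
    (hlasts : ∀ b b' : Q'.A, S₁.arrows.getLast? = some b → S₂.arrows.getLast? = some b' →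
      b = b') :
    ∃ w : Path Q' x₁ x₂, S₁ = w.comp S₂ := by
  have huniq' : ∀ a b c : (FQuiver.rev Q').A, (FQuiver.rev Q').src b = (FQuiver.rev Q').tgt a →
      (FQuiver.rev Q').src c = (FQuiver.rev Q').tgt a → flip G a b → flip G a c → b = c := by
    intro a b c hb hc h1 h2
    exact huniqP a b c hb hc h1 h2
  have hrc1 : List.Chain' (flip G) S₁.rev.arrows := by
    rw [arrows_rev, List.Chain', List.isChain_reverse]
    exact hc1
  have hrc2 : List.Chain' (flip G) S₂.rev.arrows := by
    rw [arrows_rev, List.Chain', List.isChain_reverse]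
    exact hc2
  have hheads : ∀ b b' : Q'.A, S₂.rev.arrows.head? = some b → S₁.rev.arrows.head? = some b' →
      b = b' := by
    intro b b' hb hb'
    rw [arrows_rev, List.head?_reverse] at hb hb'
    exact (hlasts b' b hb' hb).symm
  obtain ⟨r, hr⟩ := gfollow (Q' := FQuiver.rev Q') (flip G) huniq' S₂.rev.length S₂.rev S₁.rev
    le_rfl (by simp [hlen]) hrc2 hrc1 hheads
  refine ⟨r.rev, ?_⟩
  have := congrArg Path.rev hr
  rw [rev_comp, rev_rev, rev_rev] at this
  exact this

variable {k : Type} [Field k]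

/-- The goodness relation of consecutive arrows: the length-2 path `d b` is not in `I`. -/
def Gs (SB : SpecialBiserial k Q) : Q.A → Q.A → Prop :=
  fun d b => ∃ h : Q.src b = Q.tgt d, pvec k (comp2 d b h) ∉ SB.I

variable (SB : SpecialBiserial k Q)

theorem Gs_uniq : ∀ a b c : Q.A, Q.src b = Q.tgt a → Q.src c = Q.tgt a →
    Gs SB a b → Gs SB a c → b = c := by
  intro a b c hb hc ⟨h1, m1⟩ ⟨h2, m2⟩
  rw [Subsingleton.elim h1 hb] at m1
  rw [Subsingleton.elim h2 hc] at m2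
  exact SB.unique_succ a b c hb hc m1 m2

theorem Gs_uniq_pred : ∀ a b c : Q.A, Q.tgt b = Q.src a → Q.tgt c = Q.src a →
    Gs SB b a → Gs SB c a → b = c := by
  intro a b c hb hc ⟨h1, m1⟩ ⟨h2, m2⟩
  rw [Subsingleton.elim h1 hb.symm] at m1
  rw [Subsingleton.elim h2 hc.symm] at m2
  exact SB.unique_pred a b c hb hc m1 m2

/-- Any path whose class is not in `I` has all its consecutive pairs good. -/
theorem good_of_not_mem : ∀ {u v : Q.V} (p : Path Q u v), pvec k p ∉ SB.I →
    List.Chain' (Gs SB) p.arrows := by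
  intro u v p
  induction p with
  | nil => intro _; simp [List.Chain']
  | cons a q ih =>
      intro hp
      rw [arrows_cons, List.Chain', List.isChain_cons]
      constructor
      · intro b hb
        rcases path_cases q with ⟨h1, hq⟩ | ⟨B, hB, r, hq⟩
        · rw [hq] at hb; simp at hb
        · have hbB : b = B := by
            rw [hq] at hb; simp at hb; exact hb.symm
          subst hbB
          refine ⟨hB, fun hmem => hp ?_⟩
          have : Path.cons a q = (comp2 a b hB).comp r := by
            rw [hq]
            show (arrow Q a).comp (Path.cast hB rfl ((arrow Q b).comp r)) = _
            rw [comp_cast_assoc]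
            rfl
          rw [this]
          exact mem_comp_right SB _ _ hmem
      · apply ih
        intro hq
        exact hp (by
          have : Path.cons a q = (arrow Q a).comp q := rfl
          rw [this]
          exact mem_comp_left SB _ _ hq)

theorem chain_comp_left {R : Q.A → Q.A → Prop} {u v w : Q.V} {p : Path Q u v} {q : Path Q v w}
    (h : List.Chain' R (p.comp q).arrows) : List.Chain' R p.arrows := by
  rw [arrows_comp] at h
  exact (List.isChain_append.1 h).1

theorem chain_comp_right {R : Q.A → Q.A → Prop} {u v w : Q.V} {p : Path Q u v} {q : Path Q v w}
    (h : List.Chain' R (p.comp q).arrows) : List.Chain' R q.arrows := by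
  rw [arrows_comp] at h
  exact (List.isChain_append.1 h).2.1

/-- Extraction of the pair at the junction of a decomposition. -/
theorem junction_pair {R : Q.A → Q.A → Prop} {u v w : Q.V} {p : Path Q u v} {q : Path Q v w}
    (h : List.Chain' R (p.comp q).arrows) {b b' : Q.A} (hb : p.arrows.getLast? = some b)
    (hb' : q.arrows.head? = some b') : R b b' := by
  rw [arrows_comp] at h
  exact (List.isChain_append.1 h).2.2 b hb b' hb'

/-- At most two arrows have source `x`. -/
theorem three_src (SB : SpecialBiserial k Q) {x : Q.V} (α β ζ : Q.A) (hα : Q.src α = x) (hβ : Q.src β = x)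
    (hζ : Q.src ζ = x) (hne : α ≠ β) : ζ = α ∨ ζ = β := by
  by_contra hcon
  push_neg at hcon
  obtain ⟨h1, h2⟩ := hcon
  have hcard := SB.src_card x
  have : ({⟨α, hα⟩, ⟨β, hβ⟩, ⟨ζ, hζ⟩} : Finset {a : Q.A // Q.src a = x}).card ≤
      Fintype.card {a : Q.A // Q.src a = x} := Finset.card_le_univ _
  rw [Finset.card_insert_of_notMem (by simp [hne, h1.symm]),
    Finset.card_insert_of_notMem (by simp [h2.symm]), Finset.card_singleton] at this
  omega

end InfraD

section InfraE

variable {Q : FQuiver}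

theorem last?_eq_of_length {s v : Q.V} (p : Path Q s v) (h : p.length ≠ 0) :
    ∃ b : Q.A, p.arrows.getLast? = some b := by
  obtain ⟨b, l, hp⟩ := arrows_ne_nil_of_length p h
  rw [← Option.isSome_iff_exists, hp]
  simp [List.getLast?_isSome]

/-- A path with `Nodup` sources cannot revisit an interior vertex. -/
theorem nodup_no_mid2 {s mm v : Q.V} (C : Path Q s v) (p : Path Q s mm) (q : Path Q mm mm)
    (r : Path Q mm v) (hq : q.length ≠ 0) (hr : r.length ≠ 0)
    (heq : C = p.comp (q.comp r)) (hC : (C.arrows.map Q.src).Nodup) : False := by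
  rw [heq] at hC
  rw [arrows_comp, arrows_comp, List.map_append, List.map_append] at hC
  have h2 : ((q.arrows.map Q.src) ++ (r.arrows.map Q.src)).Nodup :=
    (List.nodup_append.1 hC).2.1
  have hdisj := (List.nodup_append.1 h2).2.2
  obtain ⟨bq, lq, hbq⟩ := arrows_ne_nil_of_length q hq
  obtain ⟨br, lr, hbr⟩ := arrows_ne_nil_of_length r hr
  have hq' : Q.src bq = mm := head_src q (by rw [hbq]; rfl)
  have hr' : Q.src br = mm := head_src r (by rw [hbr]; rfl)
  have hmemq : mm ∈ q.arrows.map Q.src := by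
    rw [hbq]; exact List.mem_map.2 ⟨bq, by simp, hq'⟩
  have hmemr : mm ∈ r.arrows.map Q.src := by
    rw [hbr]; exact List.mem_map.2 ⟨br, by simp, hr'⟩
  exact hdisj _ hmemq _ hmemr rfl

/-- Any cycle prefix of an iterate `C^k · T` of a simple cycle `C` is a power of `C`. -/
theorem posgen {m t : Q.V} (C : Path Q m m) (hC : (C.arrows.map Q.src).Nodup)
    (hClen : C.length ≠ 0) (T : Path Q m t)
    (hT0 : ∀ (w' : Path Q m m) (z' : Path Q m t), w'.length ≠ 0 → T = w'.comp z' → False) :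
    ∀ (n : ℕ) (w : Path Q m m) (W : Path Q m t) (kk : ℕ), w.length ≤ n →
      w.comp W = (C.pow kk).comp T → ∃ j, w = C.pow j := by
  intro n
  induction n with
  | zero =>
      intro w W kk hn heq
      exact ⟨0, cycle_eq_nil w (by omega)⟩
  | succ n ih =>
      intro w W kk hn heq
      rcases Nat.eq_zero_or_pos w.length with hw0 | hw0
      · exact ⟨0, cycle_eq_nil w hw0⟩
      cases kk with
      | zero =>
          exfalso
          rw [pow_zero, nil_comp] at heq
          exact hT0 w W (by omega) heq.symm
      | succ kk =>
          rw [pow_succ, comp_assoc] at heq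
          rcases le_or_gt w.length C.length with hle | hlt
          · obtain ⟨z, hz1, hz2⟩ := prefix_tri w W C ((C.pow kk).comp T) heq hle
            rcases Nat.eq_zero_or_pos z.length with hz0 | hz0
            · refine ⟨1, ?_⟩
              rw [cycle_eq_nil z hz0, comp_nil] at hz1
              rw [pow_succ, pow_zero, comp_nil]
              exact hz1.symm
            · exact absurd hz1 (fun h => nodup_no_mid2 C (Path.nil m) w z (by omega) (by omega)
                (by rw [nil_comp]; exact h) hC)
          · obtain ⟨z, hz1, hz2⟩ := prefix_tri C ((C.pow kk).comp T) w W heq.symm (le_of_lt hlt)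
            obtain ⟨j, hj⟩ := ih z W kk (by
              have := congrArg Path.length hz1
              simp at this
              omega) hz2.symm
            exact ⟨j + 1, by rw [hz1, hj, pow_succ]⟩

/-- Rotating a decomposed simple cycle. -/
theorem rot_pow {x y : Q.V} {a : Path Q x x} {Z : Path Q x y} {r₀ : Path Q y x}
    (h : a = Z.comp r₀) : ∀ kk, (a.pow kk).comp Z = Z.comp ((r₀.comp Z).pow kk) := by
  intro kk
  induction kk with
  | zero => simp
  | succ n ihn =>
      rw [pow_succ, comp_assoc, ihn, h, pow_succ, comp_assoc, ← comp_assoc r₀ Z]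

theorem rot_nodup {x y : Q.V} {a : Path Q x x} {Z : Path Q x y} {r₀ : Path Q y x}
    (h : a = Z.comp r₀) (hC : (a.arrows.map Q.src).Nodup) :
    (((r₀.comp Z).arrows.map Q.src)).Nodup := by
  rw [h, arrows_comp, List.map_append] at hC
  rw [arrows_comp, List.map_append]
  rw [List.nodup_append] at hC ⊢
  exact ⟨hC.2.1, hC.1, fun a ha b hb => (hC.2.2 b hb a ha).symm⟩

end InfraE

/-- if `u - λv ∈ I` is a binomial relation from `x` to `y` with `x ≠ y`,
`u` starts with a simple cycle `a` at `x`, and `u, v` share an arrow, then there are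
a path `p : x → y` and a nontrivial cycle `b` at `y` with `u = ap` and `v = pb`. -/
theorem stmt2 {k : Type} [Field k] {Q : FQuiver} (SB : SpecialBiserial k Q)
    {x y : Q.V} (hxy : x ≠ y)
    (a : Path Q x x) (ha : IsSimpleCycle a)
    (u v : Path Q x y) (c : k) (hc : c ≠ 0) (huv : u ≠ v)
    (hu : pvec k u ∉ SB.I) (hv : pvec k v ∉ SB.I)
    (hrel : pvec k u - c • pvec k v ∈ SB.I)
    (hstart : ∃ p : Path Q x y, u = a.comp p)
    (hshare : ∃ e : Q.A, e ∈ u.arrows ∧ e ∈ v.arrows) :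
    ∃ (p : Path Q x y) (b : Path Q y y),
      b.length ≠ 0 ∧ u = a.comp p ∧ v = p.comp b := by
  classical
  obtain ⟨p₀, hp₀⟩ := hstart
  obtain ⟨e, heu, hev⟩ := hshare
  have hGu : List.Chain' (Gs SB) u.arrows := good_of_not_mem SB u hu
  have hGv : List.Chain' (Gs SB) v.arrows := good_of_not_mem SB v hv
  have halen : a.length ≠ 0 := ha.1
  have hulen : u.length ≠ 0 := length_ne_zero_of_ne u hxy
  have hvlen : v.length ≠ 0 := length_ne_zero_of_ne v hxy
  obtain ⟨α, hαu⟩ := head?_eq_of_length u hulen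
  obtain ⟨β, hβv⟩ := head?_eq_of_length v hvlen
  obtain ⟨γ, hγu⟩ := last?_eq_of_length u hulen
  obtain ⟨δ, hδv⟩ := last?_eq_of_length v hvlen
  have hαa : a.arrows.head? = some α := by
    have h := hαu; rw [hp₀, head?_comp_left a p₀ halen] at h; exact h
  have hαsrc : Q.src α = x := head_src u hαu
  have hβsrc : Q.src β = x := head_src v hβv
  have hGa : List.Chain' (Gs SB) a.arrows := by
    have h := hGu; rw [hp₀] at h; exact chain_comp_left h
  obtain ⟨la_, hla⟩ := last?_eq_of_length a halen
  have hlatgt : Q.tgt la_ = x := last_tgt a hla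
  -- absorption helpers
  have noU : ∀ (w' : Path Q x x) (r' : Path Q y y), w'.length + r'.length ≠ 0 →
      u = w'.comp (v.comp r') → False := by
    intro w' r' hwr heq
    have h2 := swap_rel SB u v c hc hrel
    rw [heq] at h2
    exact hv (absorb_two SB v w' r' c⁻¹ hwr h2)
  have noV : ∀ (w' : Path Q x x) (r' : Path Q y y), w'.length + r'.length ≠ 0 →
      v = w'.comp (u.comp r') → False := by
    intro w' r' hwr heq
    have h2 := hrel
    rw [heq] at h2
    exact hu (absorb_two SB u w' r' c hwr h2)
  -- Step 1: first arrows differ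
  have hαβ : α ≠ β := by
    intro hEq
    rcases le_or_gt u.length v.length with hle | hlt
    · obtain ⟨r, hr⟩ := gfollow (Gs SB) (Gs_uniq SB) u.length u v le_rfl hle hGu hGv
        (fun b b' hb hb' => by
          rw [hαu] at hb; rw [hβv] at hb'
          rw [← Option.some.inj hb, ← Option.some.inj hb', hEq])
      rcases Nat.eq_zero_or_pos r.length with h0 | h0
      · rw [cycle_eq_nil r h0, comp_nil] at hr
        exact huv hr.symm
      · exact noV (Path.nil x) r (by simp; omega) (by rw [nil_comp]; exact hr)
    · obtain ⟨r, hr⟩ := gfollow (Gs SB) (Gs_uniq SB) v.length v u le_rfl (le_of_lt hlt) hGv hGu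
        (fun b b' hb hb' => by
          rw [hβv] at hb; rw [hαu] at hb'
          rw [← Option.some.inj hb, ← Option.some.inj hb', hEq])
      have hrlen : r.length ≠ 0 := by
        have h := congrArg Path.length hr; simp at h; omega
      exact noU (Path.nil x) r (by simp; omega) (by rw [nil_comp]; exact hr)
  -- Step 2: last arrows differ
  have hγδ : γ ≠ δ := by
    intro hEq
    rcases le_or_gt v.length u.length with hle | hlt
    · obtain ⟨w, hw⟩ := bfollow (Gs SB) (Gs_uniq_pred SB) u v hle hGu hGv
        (fun b b' hb hb' => by
          rw [hγu] at hb; rw [hδv] at hb'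
          rw [← Option.some.inj hb, ← Option.some.inj hb', hEq])
      rcases Nat.eq_zero_or_pos w.length with h0 | h0
      · rw [cycle_eq_nil w h0, nil_comp] at hw
        exact huv hw
      · exact noU w (Path.nil y) (by omega) (by rw [comp_nil]; exact hw)
    · obtain ⟨w, hw⟩ := bfollow (Gs SB) (Gs_uniq_pred SB) v u (le_of_lt hlt) hGv hGu
        (fun b b' hb hb' => by
          rw [hδv] at hb; rw [hγu] at hb'
          rw [← Option.some.inj hb, ← Option.some.inj hb', hEq])
      have hwlen : w.length ≠ 0 := by
        have h := congrArg Path.length hw; simp at h; omega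
      exact noV w (Path.nil y) (by omega) (by rw [comp_nil]; exact hw)
  -- The chase: peel copies of `a` off the front of `u`.
  have CHASE : ∀ (HT : ∀ (kk : ℕ) (Z : Path Q x y) (r₀ : Path Q y x), 1 ≤ kk →
        Z.arrows.head? = some α → u = (a.pow kk).comp Z → a = Z.comp r₀ →
        Z.length < a.length → False),
      ∀ (n kk : ℕ) (Z : Path Q x y), 1 ≤ kk → Z.length ≤ n → u = (a.pow kk).comp Z →
      ∃ (p : Path Q x y) (b : Path Q y y), b.length ≠ 0 ∧ u = a.comp p ∧ v = p.comp b := by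
    intro HT n
    induction n with
    | zero =>
        intro kk Z _ hZn _
        exact absurd (by omega : Z.length = 0) (length_ne_zero_of_ne Z hxy)
    | succ n ih =>
        intro kk Z hk hZn huZ
        have hZlen : Z.length ≠ 0 := length_ne_zero_of_ne Z hxy
        obtain ⟨ζ, hζ⟩ := head?_eq_of_length Z hZlen
        have hζsrc : Q.src ζ = x := head_src Z hζ
        have hGZ : List.Chain' (Gs SB) Z.arrows := by
          have h := hGu; rw [huZ] at h; exact chain_comp_right h
        have hjunζ : Gs SB la_ ζ := by
          have h := hGu; rw [huZ] at h
          exact junction_pair h (by rw [last?_pow a halen kk (by omega)]; exact hla) hζ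
        rcases three_src SB α β ζ hαsrc hβsrc hζsrc hαβ with hζα | hζβ
        · subst hζα
          rcases le_or_gt a.length Z.length with hle | hlt
          · obtain ⟨Z', hZ'⟩ := gfollow (Gs SB) (Gs_uniq SB) a.length a Z le_rfl hle hGa hGZ
              (fun b b' hb hb' => by
                rw [hαa] at hb; rw [hζ] at hb'
                rw [← Option.some.inj hb, ← Option.some.inj hb'])
            have hZ'len : Z'.length ≤ n := by
              have h := congrArg Path.length hZ'; simp at h; omega
            apply ih (kk + 1) Z' (by omega) hZ'len
            rw [huZ, hZ', ← comp_assoc, pow_succ_comm, ← pow_succ]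
          · obtain ⟨r₀, hr₀⟩ := gfollow (Gs SB) (Gs_uniq SB) Z.length Z a le_rfl
              (le_of_lt hlt) hGZ hGa
              (fun b b' hb hb' => by
                rw [hζ] at hb; rw [hαa] at hb'
                rw [← Option.some.inj hb, ← Option.some.inj hb'])
            exact (HT kk Z r₀ hk hζ huZ hr₀ hlt).elim
        · subst hζβ
          rcases Nat.lt_or_ge 1 kk with hk2 | hk1
          · -- kk ≥ 2: two different successors of the last arrow of `a`
            obtain ⟨m, rfl⟩ : ∃ m, kk = m + 2 := ⟨kk - 2, by omega⟩
            have hWhead : ((a.pow (m+1)).comp Z).arrows.head? = some α := by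
              rw [head?_comp_left _ _ (by rw [length_pow]; exact Nat.mul_ne_zero (by omega) halen),
                pow_succ, head?_comp_left a _ halen]
              exact hαa
            have hjunα : Gs SB la_ α := by
              have h := hGu
              rw [huZ, show a.pow (m+2) = a.comp (a.pow (m+1)) from rfl, comp_assoc] at h
              exact junction_pair h hla hWhead
            exact (hαβ (Gs_uniq SB la_ α ζ (by rw [hαsrc, hlatgt]) (by rw [hζsrc, hlatgt])
              hjunα hjunζ)).elim
          · -- kk = 1: the leaf where the conclusion (or a contradiction) appears
            obtain rfl : kk = 1 := by omega
            have huaZ : u = a.comp Z := by rw [huZ, pow_succ, pow_zero, comp_nil]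
            rcases le_or_gt Z.length v.length with hle | hlt
            · obtain ⟨r, hr⟩ := gfollow (Gs SB) (Gs_uniq SB) Z.length Z v le_rfl hle hGZ hGv
                (fun b b' hb hb' => by
                  rw [hζ] at hb; rw [hβv] at hb'
                  rw [← Option.some.inj hb, ← Option.some.inj hb'])
              rcases Nat.eq_zero_or_pos r.length with h0 | h0
              · rw [cycle_eq_nil r h0, comp_nil] at hr
                exact (noU a (Path.nil y) (by omega) (by rw [comp_nil, hr]; exact huaZ)).elim
              · exact ⟨Z, r, by omega, huaZ, hr⟩
            · obtain ⟨r, hr⟩ := gfollow (Gs SB) (Gs_uniq SB) v.length v Z le_rfl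
                (le_of_lt hlt) hGv hGZ
                (fun b b' hb hb' => by
                  rw [hβv] at hb; rw [hζ] at hb'
                  rw [← Option.some.inj hb, ← Option.some.inj hb'])
              exact (noU a r (by omega) (by rw [huaZ, hr])).elim
  -- Step 3: split `u` and `v` at the shared arrow `e`.
  obtain ⟨s₁, t₁, hsplit₁⟩ := split_at_mem u e heu
  obtain ⟨s₂, t₂, hsplit₂⟩ := split_at_mem v e hev
  have hu2 : u = (s₁.comp (arrow Q e)).comp t₁ := by rw [hsplit₁, comp_assoc]
  have hv2 : v = (s₂.comp (arrow Q e)).comp t₂ := by rw [hsplit₂, comp_assoc]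
  have hGS₁ : List.Chain' (Gs SB) (s₁.comp (arrow Q e)).arrows := by
    have h := hGu; rw [hu2] at h; exact chain_comp_left h
  have hGS₂ : List.Chain' (Gs SB) (s₂.comp (arrow Q e)).arrows := by
    have h := hGv; rw [hv2] at h; exact chain_comp_left h
  have hGE₁ : List.Chain' (Gs SB) ((arrow Q e).comp t₁).arrows := by
    have h := hGu; rw [hsplit₁] at h; exact chain_comp_right h
  have hGE₂ : List.Chain' (Gs SB) ((arrow Q e).comp t₂).arrows := by
    have h := hGv; rw [hsplit₂] at h; exact chain_comp_right h
  have hlastS₁ : (s₁.comp (arrow Q e)).arrows.getLast? = some e := by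
    rw [last?_comp_right s₁ (arrow Q e) (by simp)]; rfl
  have hlastS₂ : (s₂.comp (arrow Q e)).arrows.getLast? = some e := by
    rw [last?_comp_right s₂ (arrow Q e) (by simp)]; rfl
  have hheadE₁ : ((arrow Q e).comp t₁).arrows.head? = some e := rfl
  have hheadE₂ : ((arrow Q e).comp t₂).arrows.head? = some e := rfl
  -- compare the suffixes after `e`
  have Ecmp : (∃ b' : Path Q y y, (arrow Q e).comp t₂ = ((arrow Q e).comp t₁).comp b') ∨
      (∃ b' : Path Q y y, (arrow Q e).comp t₁ = ((arrow Q e).comp t₂).comp b' ∧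
        b'.length ≠ 0) := by
    rcases le_or_gt ((arrow Q e).comp t₁).length ((arrow Q e).comp t₂).length with hle | hlt
    · exact .inl (gfollow (Gs SB) (Gs_uniq SB) _ _ _ le_rfl hle hGE₁ hGE₂
        (fun b b' hb hb' => by
          rw [hheadE₁] at hb; rw [hheadE₂] at hb'
          rw [← Option.some.inj hb, ← Option.some.inj hb']))
    · obtain ⟨b', hb'⟩ := gfollow (Gs SB) (Gs_uniq SB) _ _ _ le_rfl (le_of_lt hlt) hGE₂ hGE₁
        (fun b b' hb hb' => by
          rw [hheadE₂] at hb; rw [hheadE₁] at hb'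
          rw [← Option.some.inj hb, ← Option.some.inj hb'])
      refine .inr ⟨b', hb', ?_⟩
      have h := congrArg Path.length hb'
      simp only [length_comp, length_arrow] at h hlt
      omega
  -- compare the prefixes ending with `e`
  have Scmp : (∃ w' : Path Q x x, s₁.comp (arrow Q e) = w'.comp (s₂.comp (arrow Q e))) ∨
      (∃ w' : Path Q x x, s₂.comp (arrow Q e) = w'.comp (s₁.comp (arrow Q e)) ∧
        w'.length ≠ 0) := by
    rcases le_or_gt (s₂.comp (arrow Q e)).length (s₁.comp (arrow Q e)).length with hle | hlt
    · exact .inl (bfollow (Gs SB) (Gs_uniq_pred SB) _ _ hle hGS₁ hGS₂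
        (fun b b' hb hb' => by
          rw [hlastS₁] at hb; rw [hlastS₂] at hb'
          rw [← Option.some.inj hb, ← Option.some.inj hb']))
    · obtain ⟨w', hw'⟩ := bfollow (Gs SB) (Gs_uniq_pred SB) _ _ (le_of_lt hlt) hGS₂ hGS₁
        (fun b b' hb hb' => by
          rw [hlastS₂] at hb; rw [hlastS₁] at hb'
          rw [← Option.some.inj hb, ← Option.some.inj hb'])
      refine .inr ⟨w', hw', ?_⟩
      have h := congrArg Path.length hw'
      simp only [length_comp, length_arrow] at h hlt
      omega
  rcases Scmp with ⟨w, hw⟩ | ⟨w, hw, hwpos⟩ <;> rcases Ecmp with ⟨b, hE⟩ | ⟨b, hE, hbpos⟩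
  · -- Combo 1: u = w · P, v = P · b with P = S₂ · t₁  (case (i))
    have ht₂ : t₂ = t₁.comp b := comp_left_cancel (arrow Q e) t₂ (t₁.comp b)
      (by rw [← comp_assoc]; exact hE)
    have huP : u = w.comp ((s₂.comp (arrow Q e)).comp t₁) := by
      rw [hu2, hw, comp_assoc]
    have hvP : v = ((s₂.comp (arrow Q e)).comp t₁).comp b := by
      rw [hv2, ht₂, ← comp_assoc]
    rcases Nat.eq_zero_or_pos b.length with hb0 | hb0
    · rw [cycle_eq_nil b hb0, comp_nil] at hvP
      rcases Nat.eq_zero_or_pos w.length with hw0 | hw0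
      · rw [cycle_eq_nil w hw0, nil_comp] at huP
        exact (huv (huP.trans hvP.symm)).elim
      · exact (noU w (Path.nil y) (by omega)
          (by rw [comp_nil, hvP]; exact huP)).elim
    rcases Nat.eq_zero_or_pos w.length with hw0 | hw0
    · rw [cycle_eq_nil w hw0, nil_comp] at huP
      exact (noV (Path.nil x) b (by omega) (by rw [nil_comp, huP]; exact hvP)).elim
    -- case (i) proper: run the chase, terminal case is impossible
    refine CHASE ?_ p₀.length 1 p₀ le_rfl le_rfl
      (by rw [hp₀, pow_succ, pow_zero, comp_nil])
    intro kk Z r₀ hkk hZα huZ har₀ hZa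
    have hr₀len : r₀.length ≠ 0 := by
      have h := congrArg Path.length har₀; simp at h; omega
    obtain ⟨j, hj⟩ := posgen a ha.2 halen Z
      (by
        intro w' z' hw' hZeq
        exact nodup_no_mid2 a (Path.nil x) w' (z'.comp r₀) hw'
          (by simp; omega)
          (by rw [nil_comp, har₀, hZeq, comp_assoc]) ha.2)
      w.length w ((s₂.comp (arrow Q e)).comp t₁) kk le_rfl (by rw [← huP]; exact huZ)
    have hj1 : j ≠ 0 := by
      intro h0
      rw [h0, pow_zero] at hj
      have h := congrArg Path.length hj; simp at h; omega
    have hjkk : j ≤ kk := by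
      have h1 := congrArg Path.length hj
      have h2 := congrArg Path.length ((huP.symm).trans huZ)
      have h3 : 1 ≤ ((s₂.comp (arrow Q e)).comp t₁).length :=
        Nat.one_le_iff_ne_zero.2 (length_ne_zero_of_ne _ hxy)
      simp at h1 h2
      by_contra hcon
      have h4 : (kk + 1) * a.length ≤ j * a.length :=
        Nat.mul_le_mul_right a.length (by omega)
      rw [Nat.add_mul, one_mul] at h4
      omega
    have hP : (s₂.comp (arrow Q e)).comp t₁ = (a.pow (kk - j)).comp Z := by
      apply comp_left_cancel (a.pow j)
      rw [← comp_assoc (a.pow j) (a.pow (kk - j)) Z, ← pow_add,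
        Nat.add_sub_cancel' hjkk, ← hj, ← huP]
      exact huZ
    have hPβ : ((s₂.comp (arrow Q e)).comp t₁).arrows.head? = some β := by
      have h := hβv
      rw [hvP, head?_comp_left _ _ (length_ne_zero_of_ne _ hxy)] at h
      exact h
    have hPα : ((s₂.comp (arrow Q e)).comp t₁).arrows.head? = some α := by
      rcases Nat.eq_zero_or_pos (kk - j) with h0 | h0
      · rw [hP, h0, pow_zero, nil_comp]; exact hZα
      · obtain ⟨mm, hmm⟩ : ∃ mm, kk - j = mm + 1 := ⟨kk - j - 1, by omega⟩
        rw [hP, head?_comp_left _ _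
            (by rw [length_pow]; exact Nat.mul_ne_zero (by omega) halen),
          hmm, pow_succ, head?_comp_left a _ halen]
        exact hαa
    exact hαβ (Option.some.inj (hPα.symm.trans hPβ))
  · -- Combo 3: u = w · (v · b), impossible
    have ht₁ : t₁ = t₂.comp b := comp_left_cancel (arrow Q e) t₁ (t₂.comp b)
      (by rw [← comp_assoc]; exact hE)
    have hkey : u = w.comp (v.comp b) := by
      rw [hu2, hw, ht₁, comp_assoc, ← comp_assoc (s₂.comp (arrow Q e)), ← hv2]
    rcases Nat.eq_zero_or_pos (w.length + b.length) with h0 | h0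
    · have hw0 : w.length = 0 := by omega
      have hb0 : b.length = 0 := by omega
      rw [cycle_eq_nil w hw0, nil_comp, cycle_eq_nil b hb0, comp_nil] at hkey
      exact (huv hkey).elim
    · exact (noU w b (by omega) hkey).elim
  · -- Combo 2: v = w · (u · b), impossible
    have ht₂ : t₂ = t₁.comp b := comp_left_cancel (arrow Q e) t₂ (t₁.comp b)
      (by rw [← comp_assoc]; exact hE)
    have hkey : v = w.comp (u.comp b) := by
      rw [hv2, hw, ht₂, comp_assoc, ← comp_assoc (s₁.comp (arrow Q e)), ← hu2]
    rcases Nat.eq_zero_or_pos b.length with hb0 | hb0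
    · rw [cycle_eq_nil b hb0, comp_nil] at hkey
      exact (noV w (Path.nil y) (by omega) (by rw [comp_nil]; exact hkey)).elim
    · exact (noV w b (by omega) hkey).elim
  · -- Combo 4: v = w · P', u = P' · b with P' = S₁ · t₂  (case (iv))
    have ht₁ : t₁ = t₂.comp b := comp_left_cancel (arrow Q e) t₁ (t₂.comp b)
      (by rw [← comp_assoc]; exact hE)
    have huP : u = ((s₁.comp (arrow Q e)).comp t₂).comp b := by
      rw [hu2, ht₁, ← comp_assoc]
    have hvP : v = w.comp ((s₁.comp (arrow Q e)).comp t₂) := by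
      rw [hv2, hw, comp_assoc]
    rcases Nat.eq_zero_or_pos b.length with hb0 | hb0
    · rw [cycle_eq_nil b hb0, comp_nil] at huP
      exact (noV w (Path.nil y) (by omega) (by rw [comp_nil, huP]; exact hvP)).elim
    -- case (iv) proper: run the chase, terminal case contradicts `last u ≠ last v`
    refine CHASE ?_ p₀.length 1 p₀ le_rfl le_rfl
      (by rw [hp₀, pow_succ, pow_zero, comp_nil])
    intro kk Z r₀ hkk hZα huZ har₀ hZa
    have hZlen : Z.length ≠ 0 := length_ne_zero_of_ne Z hxy
    have hr₀len : r₀.length ≠ 0 := by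
      have h := congrArg Path.length har₀; simp at h; omega
    have hrot : u = Z.comp ((r₀.comp Z).pow kk) := by rw [huZ, rot_pow har₀]
    have hrZlen : (r₀.comp Z).length ≠ 0 := by simp; omega
    have hlastu : u.arrows.getLast? = Z.arrows.getLast? := by
      rw [hrot, last?_comp_right _ _
          (by rw [length_pow]; exact Nat.mul_ne_zero (by omega) hrZlen),
        last?_pow _ hrZlen kk (by omega), last?_comp_right r₀ Z hZlen]
    have hlastv : v.arrows.getLast? = ((s₁.comp (arrow Q e)).comp t₂).arrows.getLast? := by
      rw [hvP, last?_comp_right _ _ (length_ne_zero_of_ne _ hxy)]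
    have heq2 : ((s₁.comp (arrow Q e)).comp t₂).comp b = Z.comp ((r₀.comp Z).pow kk) :=
      (huP.symm).trans hrot
    rcases le_or_gt ((s₁.comp (arrow Q e)).comp t₂).length Z.length with hle | hlt
    · obtain ⟨z, hz1, hz2⟩ := prefix_tri _ b Z _ heq2 hle
      rcases Nat.eq_zero_or_pos z.length with h0 | h0
      · rw [cycle_eq_nil z h0, comp_nil] at hz1
        apply hγδ
        apply Option.some.inj
        rw [← hγu, ← hδv, hlastu, hlastv, hz1]
      · exact nodup_no_mid2 a ((s₁.comp (arrow Q e)).comp t₂) z r₀ (by omega) hr₀len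
          (by rw [har₀, hz1, comp_assoc]) ha.2
    · obtain ⟨ρ, hρ1, hρ2⟩ := prefix_tri Z _ _ b heq2.symm (le_of_lt hlt)
      obtain ⟨i, hi⟩ := posgen (r₀.comp Z) (rot_nodup har₀ ha.2) hrZlen (Path.nil y)
        (fun w' z' hw' hEq => by
          have h := congrArg Path.length hEq; simp at h; omega)
        ρ.length ρ b kk le_rfl (by rw [comp_nil]; exact hρ2.symm)
      have hρlen : ρ.length ≠ 0 := by
        have h := congrArg Path.length hρ1
        simp only [length_comp, length_arrow] at h hlt
        omega
      have hilen : i ≠ 0 := by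
        intro hi0
        rw [hi0, pow_zero] at hi
        have h := congrArg Path.length hi; simp at h; omega
      apply hγδ
      apply Option.some.inj
      rw [← hγu, ← hδv, hlastu, hlastv, hρ1,
        last?_comp_right _ _ hρlen, hi, last?_pow _ hrZlen i hilen,
        last?_comp_right r₀ Z hZlen]

end FQuiver
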